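/- Let p be a prime. The field ℚ_{tot,p} of totally p-adic algebraic numbers (the maximal algebraic extension of ℚ in which p is totally split, equivalently the intersection of all conjugates of ℚ_p ∩ ℚ̄ inside a fixed algebraic closure) is not Hilbertian. -/

import Mathlib

open Polynomial

section helpers

variable {R : Type*} [CommRing R]

lemma quadMonic' (a b : R) [Nontrivial R] : (X ^ 2 + C a * X + C b).Monic := by
  have h : (X ^ 2 + C a * X + C b) = X ^ 2 + (C a * X + C b) := by ring
  rw [h]
  exact monic_X_pow_add (degree_linear_le.trans_lt (by norm_num))

lemma quadNatDegree (a b : R) [Nontrivial R] : (X ^ 2 + C a * X + C b).natDegree = 2 := by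
  have h : (X ^ 2 + C a * X + C b) = C 1 * X ^ 2 + C a * X + C b := by
    rw [C_1, one_mul]
  rw [h]
  exact natDegree_quadratic one_ne_zero

lemma quadCoeff0 (a b : R) : (X ^ 2 + C a * X + C b).coeff 0 = b := by
  simp [coeff_one]

lemma quadCoeff1 (a b : R) : (X ^ 2 + C a * X + C b).coeff 1 = a := by
  simp [coeff_one]

lemma quadEval0 (a b : R) : (X ^ 2 + C a * X - C b).eval 0 = -b := by simp

lemma quadDerivEval0 (a b : R) : (derivative (X ^ 2 + C a * X - C b)).eval 0 = a := by
  simp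

variable {K : Type*} [Field K]

/-- A monic quadratic with a root is not irreducible. -/
lemma quadNotIrred (a b x : K) (hx : x ^ 2 + a * x + b = 0) :
    ¬ Irreducible (X ^ 2 + C a * X + C b) := by
  rw [(quadMonic' a b).not_irreducible_iff_exists_add_mul_eq_coeff (quadNatDegree a b)]
  exact ⟨-x, x + a, by rw [quadCoeff0]; linear_combination hx, by rw [quadCoeff1]; ring⟩

/-- A quadratic without roots is irreducible. -/
lemma quadIrred (a b : K) (h : ∀ x : K, x ^ 2 + a * x + b ≠ 0) :
    Irreducible (X ^ 2 + C a * X + C b) := by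
  rw [irreducible_iff_roots_eq_zero_of_degree_le_three
    (by rw [quadNatDegree]) (by rw [quadNatDegree]; norm_num)]
  rw [Multiset.eq_zero_iff_forall_notMem]
  intro x hx
  rw [mem_roots ((quadMonic' a b).ne_zero), IsRoot.def] at hx
  exact h x (by simpa using hx)

end helpers

lemma padicQuadRoot (p : ℕ) [hp : Fact p.Prime] (r : ℚ_[p]) :
    ∃ z : ℚ_[p], z ^ 2 + (r ^ 2 + p) * z - p ^ 2 * r ^ 2 = 0 := by
  have hp1 : (1 : ℝ) < p := by exact_mod_cast hp.out.one_lt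
  have hp0 : (0 : ℝ) < (p : ℝ)⁻¹ := by positivity
  have hple : (p : ℝ)⁻¹ < 1 := by
    rw [inv_lt_one_iff₀]; right; exact hp1
  by_cases h : ‖r‖ ≤ 1
  · -- integral case
    set s : ℤ_[p] := ⟨r, h⟩ with hs
    set a : ℤ_[p] := s ^ 2 + p with ha
    set b : ℤ_[p] := p ^ 2 * s ^ 2 with hb
    have hsle : ‖s‖ ≤ 1 := s.norm_le_one
    have hn2 : ‖s ^ 2‖ = ‖s‖ ^ 2 := norm_pow s 2
    have hnb : ‖b‖ = ((p:ℝ)⁻¹) ^ 2 * ‖s‖ ^ 2 := by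
      rw [hb, norm_mul, norm_pow, norm_pow, PadicInt.norm_p]
    have hs2p : ‖s ^ 2‖ ≠ ‖(p : ℤ_[p])‖ := by
      rw [hn2, PadicInt.norm_p]
      rcases eq_or_lt_of_le hsle with h1 | h1
      · rw [h1]; simpa using hple.ne'
      · have hsp : ‖s‖ ≤ (p:ℝ)⁻¹ := by
          obtain ⟨t, ht⟩ := (PadicInt.norm_lt_one_iff_dvd s).mp h1
          rw [ht, norm_mul, PadicInt.norm_p]
          calc (p:ℝ)⁻¹ * ‖t‖ ≤ (p:ℝ)⁻¹ * 1 :=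
                mul_le_mul_of_nonneg_left t.norm_le_one (le_of_lt hp0)
            _ = (p:ℝ)⁻¹ := mul_one _
        intro hcon
        nlinarith [norm_nonneg s]
    have hna : ‖a‖ = max (‖s‖ ^ 2) ((p:ℝ)⁻¹) := by
      rw [ha, PadicInt.norm_add_eq_max_of_ne hs2p, hn2, PadicInt.norm_p]
    have hnorm : ‖(X ^ 2 + C a * X - C b).eval 0‖ <
        ‖(derivative (X ^ 2 + C a * X - C b)).eval 0‖ ^ 2 := by
      rw [quadEval0, quadDerivEval0, norm_neg, hnb, hna]
      rcases eq_or_lt_of_le hsle with h1 | h1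
      · rw [h1]
        have hm : ((1:ℝ)) ^ 2 ⊔ ((p:ℝ)⁻¹) = 1 := by
          rw [one_pow]; exact max_eq_left (le_of_lt hple)
        rw [hm, one_pow, mul_one]
        nlinarith
      · have hs2 : ‖s‖ ^ 2 < 1 := by nlinarith [norm_nonneg s]
        have hlt : ((p:ℝ)⁻¹) ^ 2 * ‖s‖ ^ 2 < ((p:ℝ)⁻¹) ^ 2 * 1 :=
          mul_lt_mul_of_pos_left hs2 (by positivity)
        have hle2 : ((p:ℝ)⁻¹) ^ 2 ≤ (max (‖s‖ ^ 2) ((p:ℝ)⁻¹)) ^ 2 :=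
          pow_le_pow_left₀ (le_of_lt hp0) (le_max_right _ _) 2
        rw [mul_one] at hlt
        linarith
    obtain ⟨z, hz, -⟩ := hensels_lemma hnorm
    have hz' : z ^ 2 + a * z - b = 0 := by simpa using hz
    refine ⟨(z : ℚ_[p]), ?_⟩
    have hcast := congrArg (fun t : ℤ_[p] => (t : ℚ_[p])) hz'
    rw [ha, hb] at hcast
    push_cast at hcast
    exact_mod_cast hcast
  · -- non-integral case
    push_neg at h
    have hr0 : r ≠ 0 := by
      intro h0; rw [h0, norm_zero] at h; linarith
    have hinvle : ‖r⁻¹‖ < 1 := by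
      rw [norm_inv, inv_lt_one_iff₀]; right; exact h
    set s : ℤ_[p] := ⟨r⁻¹, le_of_lt hinvle⟩ with hs
    have hslt : ‖s‖ < 1 := hinvle
    set a : ℤ_[p] := 1 + p * s ^ 2 with ha
    set b : ℤ_[p] := p ^ 2 * s ^ 2 with hb
    have hps2 : ‖(p : ℤ_[p]) * s ^ 2‖ ≤ (p:ℝ)⁻¹ := by
      rw [norm_mul, PadicInt.norm_p, norm_pow]
      calc (p:ℝ)⁻¹ * ‖s‖ ^ 2 ≤ (p:ℝ)⁻¹ * 1 := by
            apply mul_le_mul_of_nonneg_left _ (le_of_lt hp0)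
            nlinarith [norm_nonneg s, s.norm_le_one]
        _ = (p:ℝ)⁻¹ := mul_one _
    have hne : ‖(1 : ℤ_[p])‖ ≠ ‖(p : ℤ_[p]) * s ^ 2‖ := by
      rw [norm_one]
      intro hcon
      rw [← hcon] at hps2
      linarith
    have hna : ‖a‖ = 1 := by
      rw [ha, PadicInt.norm_add_eq_max_of_ne hne, norm_one]
      exact max_eq_left (hps2.trans (le_of_lt hple))
    have hnb : ‖b‖ < 1 := by
      rw [hb, norm_mul, norm_pow, PadicInt.norm_p, norm_pow]
      calc ((p:ℝ)⁻¹) ^ 2 * ‖s‖ ^ 2 ≤ ((p:ℝ)⁻¹) ^ 2 * 1 := by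
            apply mul_le_mul_of_nonneg_left _ (by positivity)
            nlinarith [norm_nonneg s, s.norm_le_one]
        _ = ((p:ℝ)⁻¹) ^ 2 := mul_one _
        _ < 1 := by nlinarith
    have hnorm : ‖(X ^ 2 + C a * X - C b).eval 0‖ <
        ‖(derivative (X ^ 2 + C a * X - C b)).eval 0‖ ^ 2 := by
      rw [quadEval0, quadDerivEval0, norm_neg, hna, one_pow]
      exact hnb
    obtain ⟨w, hw, -⟩ := hensels_lemma hnorm
    have hw' : w ^ 2 + a * w - b = 0 := by simpa using hw
    refine ⟨(w : ℚ_[p]) * r ^ 2, ?_⟩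
    have hcast := congrArg (fun t : ℤ_[p] => (t : ℚ_[p])) hw'
    rw [ha, hb] at hcast
    push_cast at hcast
    have hrr : r⁻¹ * r = 1 := inv_mul_cancel₀ hr0
    linear_combination (r^4) * hcast +
      ((p:ℚ_[p])^2*r^2 - (p:ℚ_[p])*(w:ℚ_[p])*r^2)*(r⁻¹*r+1) * hrr

lemma padicRange (p : ℕ) [Fact p.Prime] (r : ℚ_[p]) (w : AlgebraicClosure ℚ_[p])
    (hw : w ^ 2 + ((algebraMap ℚ_[p] (AlgebraicClosure ℚ_[p]) r) ^ 2 + p) * w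
      - p ^ 2 * (algebraMap ℚ_[p] (AlgebraicClosure ℚ_[p]) r) ^ 2 = 0) :
    ∃ z : ℚ_[p], w = algebraMap ℚ_[p] (AlgebraicClosure ℚ_[p]) z := by
  obtain ⟨z₁, h1⟩ := padicQuadRoot p r
  set ι := algebraMap ℚ_[p] (AlgebraicClosure ℚ_[p]) with hι
  have e1 : (ι z₁) ^ 2 + ((ι r) ^ 2 + p) * (ι z₁) - p ^ 2 * (ι r) ^ 2 = 0 := by
    have h2 := congrArg ι h1
    simpa [map_add, map_mul, map_pow, map_sub, map_natCast] using h2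
  have key : (w - ι z₁) * (w - ι (-(r ^ 2 + p) - z₁)) = 0 := by
    have e2 : ι (-(r ^ 2 + p) - z₁) = -((ι r) ^ 2 + p) - ι z₁ := by
      simp [map_sub, map_neg, map_add, map_pow, map_natCast]
    rw [e2]
    linear_combination hw - e1
  rcases mul_eq_zero.mp key with hk | hk
  · exact ⟨z₁, sub_eq_zero.mp hk⟩
  · exact ⟨-(r ^ 2 + p) - z₁, sub_eq_zero.mp hk⟩

lemma existsRootInF (p : ℕ) [Fact p.Prime] (F : Subfield (AlgebraicClosure ℚ))
    (hF : ∀ x : AlgebraicClosure ℚ, x ∈ F ↔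
      ∀ σ : AlgebraicClosure ℚ →+* AlgebraicClosure ℚ_[p],
        ∃ r : ℚ_[p], σ x = algebraMap ℚ_[p] (AlgebraicClosure ℚ_[p]) r) (y : F) :
    ∃ ζ : F, ζ ^ 2 + ((y : F) ^ 2 + (p : F)) * ζ - (p : F) ^ 2 * y ^ 2 = 0 := by
  set a : AlgebraicClosure ℚ := (y : AlgebraicClosure ℚ) ^ 2 + p with hadef
  set b : AlgebraicClosure ℚ := -((p : AlgebraicClosure ℚ) ^ 2 * (y : AlgebraicClosure ℚ) ^ 2)
    with hbdef
  obtain ⟨ζ₀, hζ₀⟩ := IsAlgClosed.exists_root (X ^ 2 + C a * X + C b)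
    (degree_ne_of_natDegree_ne (by rw [quadNatDegree]; norm_num))
  have heval : ζ₀ ^ 2 + a * ζ₀ + b = 0 := by simpa using hζ₀
  have heval' : ζ₀ ^ 2 + ((y : AlgebraicClosure ℚ) ^ 2 + p) * ζ₀
      - (p : AlgebraicClosure ℚ) ^ 2 * (y : AlgebraicClosure ℚ) ^ 2 = 0 := by
    rw [hadef, hbdef] at heval
    linear_combination heval
  have hmem : ζ₀ ∈ F := by
    rw [hF]
    intro σ
    obtain ⟨r, hr⟩ := (hF (y : AlgebraicClosure ℚ)).mp y.2 σ
    have hσ : (σ ζ₀) ^ 2 + ((algebraMap ℚ_[p] (AlgebraicClosure ℚ_[p]) r) ^ 2 + p) * (σ ζ₀)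
        - p ^ 2 * (algebraMap ℚ_[p] (AlgebraicClosure ℚ_[p]) r) ^ 2 = 0 := by
      have h3 := congrArg σ heval'
      simp only [map_add, map_mul, map_pow, map_sub, map_natCast, map_zero] at h3
      rw [hr] at h3
      linear_combination h3
    exact padicRange p r (σ ζ₀) hσ
  refine ⟨⟨ζ₀, hmem⟩, ?_⟩
  apply Subtype.ext
  push_cast
  exact heval'


/-- A field `F` is Hilbertian if for every polynomial `f(X, Y)` (a polynomial in `X`
over `F[Y]`) that is irreducible and separable in `X` over the rational function
field `F(Y)`, there exists `y ∈ F` such that the specialization `f(X, y)` is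
irreducible over `F`. -/
def IsHilbertian (F : Type*) [Field F] : Prop :=
  ∀ f : Polynomial (Polynomial F),
    Irreducible (f.map (algebraMap (Polynomial F) (RatFunc F))) →
    (f.map (algebraMap (Polynomial F) (RatFunc F))).Separable →
    ∃ y : F, Irreducible (f.map (Polynomial.evalRingHom y))

set_option maxHeartbeats 1000000 in
/-- For a prime `p`, the field `ℚ_{tot,p}` of totally `p`-adic algebraic
numbers (the elements of a fixed algebraic closure of `ℚ` whose image under every
embedding into an algebraic closure of `ℚ_p` lies in `ℚ_p`; equivalently, the
intersection of all conjugates of `ℚ_p ∩ ℚ̄`) is not Hilbertian. -/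
theorem stmt_9 (p : ℕ) [Fact p.Prime] (F : Subfield (AlgebraicClosure ℚ))
    (hF : ∀ x : AlgebraicClosure ℚ, x ∈ F ↔
      ∀ σ : AlgebraicClosure ℚ →+* AlgebraicClosure ℚ_[p],
        ∃ r : ℚ_[p], σ x = algebraMap ℚ_[p] (AlgebraicClosure ℚ_[p]) r) :
    ¬ IsHilbertian F := by
  intro hH
  set q : F := (p : F) with hqdef
  have hq : q ≠ 0 := Nat.cast_ne_zero.mpr (Fact.out : p.Prime).ne_zero
  have hq1 : q + 1 ≠ 0 := by
    have h1 : ((p + 1 : ℕ) : F) ≠ 0 := Nat.cast_ne_zero.mpr (Nat.succ_ne_zero p)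
    push_cast at h1
    exact h1
  set A : Polynomial F := X ^ 2 + C q with hA
  set B : Polynomial F := -(C (q ^ 2) * X ^ 2) with hB
  set f : Polynomial (Polynomial F) := X ^ 2 + C A * X + C B with hf
  set φ := algebraMap (Polynomial F) (RatFunc F) with hφ
  have hmap : f.map φ = X ^ 2 + C (φ A) * X + C (φ B) := by
    simp [hf, Polynomial.map_add, Polynomial.map_mul, Polynomial.map_pow, map_X, map_C]
  have hrhs : (C (q ^ 2) * X ^ 2 : Polynomial F) ≠ 0 :=
    mul_ne_zero (by simpa using pow_ne_zero 2 hq) (pow_ne_zero 2 X_ne_zero)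
  -- no roots in RatFunc F
  have hnoroot : ∀ x : RatFunc F, x ^ 2 + φ A * x + φ B ≠ 0 := by
    intro x hx
    have hint : IsIntegral (Polynomial F) x := by
      refine ⟨f, quadMonic' A B, ?_⟩
      rw [show (eval₂ φ x f) = x ^ 2 + φ A * x + φ B by
        simp [hf, eval₂_add, eval₂_mul, eval₂_pow, eval₂_X, eval₂_C]]
      exact hx
    obtain ⟨v, hv⟩ := IsIntegrallyClosed.isIntegral_iff.mp hint
    have hveq : v ^ 2 + A * v + B = 0 := by
      apply IsFractionRing.injective (Polynomial F) (RatFunc F)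
      rw [map_zero, map_add, map_add, map_mul, map_pow, hv]
      exact hx
    have E : ∀ x : F, (v.eval x) ^ 2 + (x ^ 2 + q) * v.eval x - q ^ 2 * x ^ 2 = 0 := by
      intro x
      have h4 := congrArg (Polynomial.eval x) hveq
      simp only [hA, hB, eval_add, eval_mul, eval_pow, eval_X, eval_C, eval_neg,
        eval_zero] at h4
      linear_combination h4
    set wv : Polynomial F := v + A with hwv
    have hprod : v * wv = C (q ^ 2) * X ^ 2 := by
      rw [hwv, hA]
      rw [hA, hB] at hveq
      linear_combination hveq
    have hv0 : v ≠ 0 := by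
      intro h0; rw [h0, zero_mul] at hprod; exact hrhs hprod.symm
    have hw0 : wv ≠ 0 := by
      intro h0; rw [h0, mul_zero] at hprod; exact hrhs hprod.symm
    have hdeg : v.natDegree + wv.natDegree = 2 := by
      rw [← natDegree_mul hv0 hw0, hprod, natDegree_C_mul (pow_ne_zero 2 hq),
        natDegree_X_pow]
    have hdiff : wv - v = X ^ 2 + C q := by rw [hwv, hA]; ring
    have h2 : 2 ≤ max wv.natDegree v.natDegree := by
      have h5 := natDegree_sub_le wv v
      rw [hdiff, natDegree_X_pow_add_C] at h5
      exact h5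
    have hcases : v.natDegree = 0 ∨ wv.natDegree = 0 := by
      rcases le_or_gt wv.natDegree v.natDegree with hle | hle
      · rw [max_eq_right hle] at h2; right; omega
      · rw [max_eq_left hle.le] at h2; left; omega
    rcases hcases with h0 | h0
    · obtain ⟨c, hc⟩ := natDegree_eq_zero.mp h0
      have E0 := E 0
      have E1 := E 1
      rw [← hc] at E0 E1
      simp only [eval_C] at E0 E1
      have hcq : c = q ^ 2 := by linear_combination E1 - E0
      rw [hcq] at E0
      have hz : q ^ 3 * (q + 1) = 0 := by linear_combination E0
      exact (mul_ne_zero (pow_ne_zero 3 hq) hq1) hz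
    · obtain ⟨c, hc⟩ := natDegree_eq_zero.mp h0
      have hveq2 : v = C c - (X ^ 2 + C q) := by
        rw [← hdiff, ← hc]; ring
      have E0 := E 0
      have E1 := E 1
      rw [hveq2] at E0 E1
      simp only [eval_sub, eval_add, eval_pow, eval_X, eval_C] at E0 E1
      have hcq : c = -q ^ 2 := by linear_combination E0 - E1
      rw [hcq] at E0
      have hz : q ^ 3 * (q + 1) = 0 := by linear_combination E0
      exact (mul_ne_zero (pow_ne_zero 3 hq) hq1) hz
  have hirrbar : Irreducible (f.map φ) := by
    rw [hmap]; exact quadIrred _ _ hnoroot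
  haveI : CharZero (RatFunc F) :=
    (RingHom.charZero_iff (algebraMap F (RatFunc F)).injective).mp inferInstance
  have hsep : (f.map φ).Separable := hirrbar.separable
  obtain ⟨y, hy⟩ := hH f hirrbar hsep
  obtain ⟨ζ, hζ⟩ := existsRootInF p F hF y
  have hevA : Polynomial.eval (y : F) A = (y : F) ^ 2 + q := by
    rw [hA]; simp
  have hevB : Polynomial.eval (y : F) B = -(q ^ 2 * (y : F) ^ 2) := by
    rw [hB]; simp
  have hmape : f.map (evalRingHom (y : F)) =
      X ^ 2 + C ((y : F) ^ 2 + q) * X + C (-(q ^ 2 * (y : F) ^ 2)) := by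
    rw [hf]
    simp only [Polynomial.map_add, Polynomial.map_mul, Polynomial.map_pow, map_X, map_C,
      coe_evalRingHom, hevA, hevB]
  rw [hmape] at hy
  exact quadNotIrred _ _ ζ (by linear_combination hζ) hy
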